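/- Let βⁿ be the symmetric B-spline of order n ((n+1)-fold self-convolution of χ_{[-1/2,1/2]}). Then √((2n+2)/12) · β^{2n+1}(0) → 1/√(2π) as n → ∞; equivalently β^{2n+1}(0) ~ √(6/(π(2n+2))) as n → ∞. -/

import Mathlib

open MeasureTheory Real

/-- The symmetric B-spline of order `n`: the `(n+1)`-fold self-convolution of the
indicator of `[-1/2, 1/2]`. -/
noncomputable def beta : ℕ → ℝ → ℝ
  | 0 => Set.indicator (Set.Icc (-(1/2) : ℝ) (1/2)) 1
  | (n+1) => fun x => ∫ y in (0:ℝ)..1, beta n (x - y + 1/2)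

open Filter
open scoped FourierTransform

lemma beta_zero (x : ℝ) : beta 0 x = Set.indicator (Set.Icc (-(1/2) : ℝ) (1/2)) 1 x := rfl

lemma beta_succ (n : ℕ) (x : ℝ) :
    beta (n+1) x = ∫ u in (x - 1/2)..(x + 1/2), beta n u := by
  show (∫ y in (0:ℝ)..1, beta n (x - y + 1/2)) = _
  have h : ∀ y : ℝ, x - y + 1/2 = (x + 1/2) - y := by intro y; ring
  simp_rw [h]
  rw [intervalIntegral.integral_comp_sub_left (fun u => beta n u) (x + 1/2)]
  have h2 : x + 1/2 - 1 = x - 1/2 := by ring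
  rw [h2]
  norm_num

lemma beta_nonneg (n : ℕ) (x : ℝ) : 0 ≤ beta n x := by
  induction n generalizing x with
  | zero => exact Set.indicator_nonneg (fun _ _ => zero_le_one) x
  | succ n ih =>
    show 0 ≤ ∫ y in (0:ℝ)..1, beta n (x - y + 1/2)
    exact intervalIntegral.integral_nonneg zero_le_one (fun y _ => ih _)

lemma beta_measurable (n : ℕ) : Measurable (beta n) := by
  induction n with
  | zero => exact (measurable_const.indicator measurableSet_Icc)
  | succ n ih =>
    have hm : StronglyMeasurable (Function.uncurry fun x y : ℝ => beta n (x - y + 1/2)) :=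
      ((ih.comp (by fun_prop : Measurable fun p : ℝ × ℝ => p.1 - p.2 + 1/2)) :
        Measurable fun p : ℝ × ℝ => beta n (p.1 - p.2 + 1/2)).stronglyMeasurable
    have := (hm.integral_prod_right
      (ν := volume.restrict (Set.Ioc (0:ℝ) 1))).measurable
    have heq : (beta (n+1)) = fun x => ∫ y in Set.Ioc (0:ℝ) 1, beta n (x - y + 1/2) := by
      funext x
      show (∫ y in (0:ℝ)..1, beta n (x - y + 1/2)) = _
      rw [intervalIntegral.integral_of_le zero_le_one]
    rw [heq]
    exact this

lemma beta_slice_integrableOn (n : ℕ) (x : ℝ) (hb : ∀ y, beta n y ≤ 1) :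
    IntervalIntegrable (fun y => beta n (x - y + 1/2)) volume 0 1 := by
  rw [intervalIntegrable_iff_integrableOn_Ioc_of_le zero_le_one]
  apply Integrable.mono' (g := fun _ => (1:ℝ))
  · exact integrableOn_const measure_Ioc_lt_top.ne
  · exact ((beta_measurable n).comp (by fun_prop)).aestronglyMeasurable
  · filter_upwards with y
    rw [Real.norm_eq_abs, abs_of_nonneg (beta_nonneg _ _)]
    exact hb _

lemma beta_le_one (n : ℕ) (x : ℝ) : beta n x ≤ 1 := by
  induction n generalizing x with
  | zero => exact Set.indicator_le' (fun _ _ => le_refl 1) (fun _ _ => zero_le_one) x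
  | succ n ih =>
    show (∫ y in (0:ℝ)..1, beta n (x - y + 1/2)) ≤ 1
    calc (∫ y in (0:ℝ)..1, beta n (x - y + 1/2)) ≤ ∫ _y in (0:ℝ)..1, (1:ℝ) := by
          apply intervalIntegral.integral_mono_on zero_le_one
            (beta_slice_integrableOn n x (fun y => ih y)) intervalIntegrable_const
          exact fun y _ => ih _
      _ = 1 := by simp

lemma beta_eq_zero (n : ℕ) (x : ℝ) (hx : (n:ℝ) + 1 ≤ |x|) : beta n x = 0 := by
  induction n generalizing x with
  | zero =>
    apply Set.indicator_of_notMem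
    intro hmem
    rcases hmem with ⟨h1, h2⟩
    rcases abs_cases x with ⟨h, -⟩ | ⟨h, -⟩ <;> simp at hx <;> linarith
  | succ n ih =>
    show (∫ y in (0:ℝ)..1, beta n (x - y + 1/2)) = 0
    rw [intervalIntegral.integral_congr (g := fun _ => (0:ℝ))]
    · simp
    · intro y hy
      rw [Set.uIcc_of_le zero_le_one] at hy
      rcases hy with ⟨hy0, hy1⟩
      apply ih
      push_cast at hx ⊢
      rcases abs_cases x with ⟨h, h'⟩ | ⟨h, h'⟩ <;>
        rcases abs_cases (x - y + 1/2) with ⟨h2, h2'⟩ | ⟨h2, h2'⟩ <;> linarith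

lemma beta_integrable (n : ℕ) : Integrable (beta n) := by
  apply Integrable.mono' (g := Set.indicator (Set.Icc (-(n:ℝ)-1) ((n:ℝ)+1)) (fun _ => (1:ℝ)))
  · rw [integrable_indicator_iff measurableSet_Icc]
    exact integrableOn_const measure_Icc_lt_top.ne
  · exact (beta_measurable n).aestronglyMeasurable
  · filter_upwards with x
    rw [Real.norm_eq_abs, abs_of_nonneg (beta_nonneg _ _)]
    by_cases hx : x ∈ Set.Icc (-(n:ℝ)-1) ((n:ℝ)+1)
    · rw [Set.indicator_of_mem hx]; exact beta_le_one n x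
    · rw [Set.indicator_of_notMem hx, beta_eq_zero n x]
      rw [Set.mem_Icc] at hx; push_neg at hx
      rcases le_or_gt (-(n:ℝ)-1) x with h | h
      · have := hx h
        rw [abs_of_nonneg (by linarith)]; linarith
      · rw [abs_of_nonpos (by linarith)]; linarith

lemma beta_continuous (n : ℕ) : Continuous (beta (n+1)) := by
  have hint := beta_integrable n
  have hprim := hint.continuous_primitive 0
  have : (beta (n+1)) = fun x =>
      (∫ u in (0:ℝ)..(x + 1/2), beta n u) - ∫ u in (0:ℝ)..(x - 1/2), beta n u := by
    funext x
    rw [beta_succ, ← intervalIntegral.integral_interval_sub_left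
      (hint.intervalIntegrable) (hint.intervalIntegrable)]
  rw [this]
  exact ((hprim.comp (continuous_add_right _)).sub (hprim.comp (continuous_sub_right _)))

private lemma nonneg_of_deriv {f f' : ℝ → ℝ} (hd : ∀ x, HasDerivAt f (f' x) x)
    (h0 : f 0 = 0) (hf' : ∀ x, 0 ≤ x → 0 ≤ f' x) : ∀ x, 0 ≤ x → 0 ≤ f x := by
  intro x hx
  have hmono : MonotoneOn f (Set.Ici 0) := by
    apply monotoneOn_of_deriv_nonneg (convex_Ici 0)
    · exact (fun y _ => ((hd y).differentiableAt).continuousAt.continuousWithinAt)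
    · exact fun y _ => ((hd y).differentiableAt).differentiableWithinAt
    · intro y hy
      rw [interior_Ici] at hy
      rw [(hd y).deriv]
      exact hf' y hy.le
  have := hmono (Set.self_mem_Ici) hx hx
  rwa [h0] at this

lemma sin_ge_poly : ∀ x : ℝ, 0 ≤ x → x - x^3/6 ≤ Real.sin x := by
  have := nonneg_of_deriv (f := fun x => Real.sin x - (x - x^3/6))
    (f' := fun x => Real.cos x - (1 - x^2/2)) ?_ (by simp) ?_
  · intro x hx; linarith [this x hx]
  · intro x
    have h1 : HasDerivAt (fun x : ℝ => x - x^3/6) (1 - x^2/2) x := by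
      have := (hasDerivAt_id' x).sub ((hasDerivAt_pow 3 x).div_const 6)
      refine this.congr_deriv ?_
      push_cast; ring
    exact (Real.hasDerivAt_sin x).sub h1
  · intro x _
    have := Real.one_sub_sq_div_two_le_cos (x := x)
    linarith

lemma cos_le_poly : ∀ x : ℝ, 0 ≤ x → Real.cos x ≤ 1 - x^2/2 + x^4/24 := by
  have := nonneg_of_deriv (f := fun x => (1 - x^2/2 + x^4/24) - Real.cos x)
    (f' := fun x => Real.sin x - (x - x^3/6)) ?_ (by norm_num) ?_
  · intro x hx; linarith [this x hx]
  · intro x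
    have h1 : HasDerivAt (fun x : ℝ => 1 - x^2/2 + x^4/24) (-x + x^3/6) x := by
      have := (((hasDerivAt_const x (1:ℝ)).sub ((hasDerivAt_pow 2 x).div_const 2)).add
        ((hasDerivAt_pow 4 x).div_const 24))
      refine this.congr_deriv ?_
      push_cast; ring
    have := h1.sub (Real.hasDerivAt_cos x)
    refine this.congr_deriv ?_
    ring
  · intro x hx
    linarith [sin_ge_poly x hx]

lemma sin_le_poly : ∀ x : ℝ, 0 ≤ x → Real.sin x ≤ x - x^3/6 + x^5/120 := by
  have := nonneg_of_deriv (f := fun x => (x - x^3/6 + x^5/120) - Real.sin x)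
    (f' := fun x => (1 - x^2/2 + x^4/24) - Real.cos x) ?_ (by norm_num) ?_
  · intro x hx; linarith [this x hx]
  · intro x
    have h1 : HasDerivAt (fun x : ℝ => x - x^3/6 + x^5/120) (1 - x^2/2 + x^4/24) x := by
      have := ((hasDerivAt_id' x).sub ((hasDerivAt_pow 3 x).div_const 6)).add
        ((hasDerivAt_pow 5 x).div_const 120)
      refine this.congr_deriv ?_
      push_cast; ring
    exact h1.sub (Real.hasDerivAt_sin x)
  · intro x hx
    linarith [cos_le_poly x hx]

/-- Key Gaussian domination: `sin u ≤ u * exp (-(u^2/6))` for `0 ≤ u ≤ 2`. -/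
lemma sin_le_gauss {u : ℝ} (h0 : 0 ≤ u) (h2 : u ≤ 2) :
    Real.sin u ≤ u * Real.exp (-(u^2/6)) := by
  set v := u^2/6 with hv
  have hv0 : 0 ≤ v := by positivity
  have hv1 : v ≤ 2/3 := by rw [hv]; nlinarith
  have hexp : 1 - v + v^2/2 - (2/9)*v^3 ≤ Real.exp (-v) := by
    have hb := Real.exp_bound (x := -v) (by rw [abs_neg, abs_of_nonneg hv0]; linarith) (n := 3)
      (by norm_num)
    have := abs_le.1 hb
    have hsum : (∑ i ∈ Finset.range 3, (-v) ^ i / (i.factorial : ℝ))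
        = 1 - v + v^2/2 := by
      simp [Finset.sum_range_succ, Nat.factorial]
      ring
    rw [hsum] at this
    have habs : |(-v)| = v := by rw [abs_neg, abs_of_nonneg hv0]
    rw [habs] at this
    have : -(v ^ 3 * ((Nat.succ 3 : ℕ) / ((Nat.factorial 3 : ℕ) * (3:ℝ)))) ≤
        rexp (-v) - (1 - v + v ^ 2 / 2) := this.1
    norm_num [Nat.factorial] at this
    linarith
  have hpoly := sin_le_poly u h0
  have key : u - u^3/6 + u^5/120 ≤ u * Real.exp (-(u^2/6)) := by
    have h1 : u - u^3/6 + u^5/120 = u * (1 - v + (3/10)*v^2) := by rw [hv]; ring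
    have h2' : 1 - v + (3/10)*v^2 ≤ 1 - v + v^2/2 - (2/9)*v^3 := by nlinarith
    rw [h1, ← hv]
    calc u * (1 - v + (3/10)*v^2) ≤ u * (1 - v + v^2/2 - (2/9)*v^3) := by
          apply mul_le_mul_of_nonneg_left h2' h0
      _ ≤ u * Real.exp (-v) := mul_le_mul_of_nonneg_left hexp h0
  linarith

lemma abs_sinc_le_gauss {u : ℝ} (h0 : 0 < u) (h2 : u ≤ 2) :
    |Real.sin u / u| ≤ Real.exp (-(u^2/6)) := by
  have hs : 0 ≤ Real.sin u :=
    Real.sin_nonneg_of_nonneg_of_le_pi h0.le (by linarith [Real.pi_gt_three])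
  rw [abs_div, abs_of_nonneg hs, abs_of_pos h0, div_le_iff₀ h0]
  rw [mul_comm]
  exact sin_le_gauss h0.le h2

lemma tendsto_slope_log : Filter.Tendsto (fun s : ℝ => Real.log (1 + s) / s)
    (nhdsWithin 0 {x | x ≠ 0}) (nhds 1) := by
  have h := Real.hasDerivAt_log one_ne_zero
  rw [hasDerivAt_iff_tendsto_slope] at h
  have hmap : Filter.Tendsto (fun s : ℝ => 1 + s) (nhdsWithin 0 {x | x ≠ 0})
      (nhdsWithin 1 {x | x ≠ 1}) := by
    rw [tendsto_nhdsWithin_iff]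
    constructor
    · have : Filter.Tendsto (fun s : ℝ => 1 + s) (nhds 0) (nhds 1) := by
        simpa using (continuous_const_add (1:ℝ)).tendsto (0:ℝ)
      exact this.mono_left nhdsWithin_le_nhds
    · filter_upwards [self_mem_nhdsWithin] with s hs
      simpa using hs
  have := h.comp hmap
  norm_num at this
  apply this.congr
  intro s
  simp [slope_def_field]

lemma tendsto_sinc_sub_one : Filter.Tendsto (fun w : ℝ => (Real.sin w / w - 1) / w^2)
    (nhdsWithin 0 (Set.Ioi 0)) (nhds (-(1/6))) := by
  apply tendsto_of_tendsto_of_tendsto_of_le_of_le'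
    (g := fun _ => -(1/6 : ℝ)) (h := fun w => -(1/6) + w^2/120)
  · exact tendsto_const_nhds
  · have hcont : Continuous (fun w : ℝ => -(1/6 : ℝ) + w^2/120) := by continuity
    have := hcont.tendsto (0:ℝ)
    norm_num at this
    exact this.mono_left nhdsWithin_le_nhds
  · filter_upwards [self_mem_nhdsWithin] with w hw
    have hw : (0:ℝ) < w := hw
    rw [le_div_iff₀ (by positivity)]
    have h1 : w - w^3/6 ≤ Real.sin w := sin_ge_poly w hw.le
    have : 1 - w^2/6 ≤ Real.sin w / w := by
      rw [le_div_iff₀ hw]; nlinarith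
    nlinarith
  · filter_upwards [self_mem_nhdsWithin] with w hw
    have hw : (0:ℝ) < w := hw
    rw [div_le_iff₀ (by positivity)]
    have h1 : Real.sin w ≤ w - w^3/6 + w^5/120 := sin_le_poly w hw.le
    have : Real.sin w / w ≤ 1 - w^2/6 + w^4/120 := by
      rw [div_le_iff₀ hw]; nlinarith
    nlinarith

lemma tendsto_log_sinc : Filter.Tendsto (fun w : ℝ => Real.log (Real.sin w / w) / w^2)
    (nhdsWithin 0 (Set.Ioi 0)) (nhds (-(1/6))) := by
  set s : ℝ → ℝ := fun w => Real.sin w / w - 1 with hs_def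
  have hs_ne : ∀ᶠ w in nhdsWithin (0:ℝ) (Set.Ioi 0), s w ≠ 0 := by
    filter_upwards [self_mem_nhdsWithin] with w hw
    have hw : (0:ℝ) < w := hw
    have : Real.sin w < w := Real.sin_lt hw
    have : Real.sin w / w < 1 := by rw [div_lt_one hw]; exact this
    simp only [hs_def]
    intro h
    nlinarith [sub_eq_zero.1 h]
  have hs0 : Filter.Tendsto s (nhdsWithin 0 (Set.Ioi 0)) (nhds 0) := by
    have h2 : Filter.Tendsto (fun w : ℝ => w^2 * ((Real.sin w / w - 1) / w^2))
        (nhdsWithin 0 (Set.Ioi 0)) (nhds 0) := by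
      have hsq : Filter.Tendsto (fun w : ℝ => w^2) (nhdsWithin (0:ℝ) (Set.Ioi 0)) (nhds 0) := by
        have := (continuous_pow 2).tendsto (0:ℝ)
        norm_num at this
        exact this.mono_left nhdsWithin_le_nhds
      have := hsq.mul tendsto_sinc_sub_one
      simpa using this
    apply h2.congr'
    filter_upwards [self_mem_nhdsWithin] with w hw
    have hw : (0:ℝ) < w := hw
    show w^2 * ((Real.sin w / w - 1) / w^2) = s w
    have h2 : Real.sin w / w - 1 = s w := rfl
    rw [h2]
    field_simp
  have hs : Filter.Tendsto s (nhdsWithin 0 (Set.Ioi 0)) (nhdsWithin 0 {x | x ≠ 0}) := by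
    rw [tendsto_nhdsWithin_iff]
    exact ⟨hs0, hs_ne⟩
  have hB := tendsto_slope_log.comp hs
  have hmul := hB.mul tendsto_sinc_sub_one
  rw [one_mul] at hmul
  apply hmul.congr'
  filter_upwards [self_mem_nhdsWithin, hs_ne] with w hw hsne
  have hw : (0:ℝ) < w := hw
  have h1 : 1 + s w = Real.sin w / w := by simp [hs_def]
  show Real.log (1 + s w) / s w * ((Real.sin w / w - 1) / w^2) = _
  have h2 : Real.sin w / w - 1 = s w := rfl
  rw [h2, h1, div_mul_div_comm, mul_comm (s w) (w^2), mul_div_mul_right _ _ hsne]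

lemma sinc_abs (x : ℝ) : Real.sin |x| / |x| = Real.sin x / x := by
  rcases abs_cases x with ⟨h, -⟩ | ⟨h, -⟩
  · rw [h]
  · rw [h, Real.sin_neg, neg_div_neg_eq]

lemma eps_pos {n : ℕ} : 0 < Real.sqrt (6/(2*(n:ℝ)+2)) := by
  apply Real.sqrt_pos.2; positivity

lemma eps_sq (n : ℕ) : (Real.sqrt (6/(2*(n:ℝ)+2)))^2 = 6/(2*(n:ℝ)+2) :=
  Real.sq_sqrt (by positivity)

lemma eps_tendsto : Filter.Tendsto (fun n : ℕ => Real.sqrt (6/(2*(n:ℝ)+2)))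
    Filter.atTop (nhds 0) := by
  have h : Filter.Tendsto (fun n : ℕ => 6/(2*(n:ℝ)+2)) Filter.atTop (nhds 0) := by
    apply Filter.Tendsto.div_atTop (tendsto_const_nhds (x := (6:ℝ)))
    apply Filter.tendsto_atTop_add_const_right
    exact (tendsto_natCast_atTop_atTop (R := ℝ)).const_mul_atTop two_pos
  simpa using h.sqrt

lemma pointwise_lim {t : ℝ} (ht : t ≠ 0) :
    Filter.Tendsto (fun n : ℕ =>
      (Real.sin (Real.sqrt (6/(2*(n:ℝ)+2)) * t) / (Real.sqrt (6/(2*(n:ℝ)+2)) * t)) ^ (2*n+2))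
      Filter.atTop (nhds (Real.exp (-t^2))) := by
  set ε : ℕ → ℝ := fun n => Real.sqrt (6/(2*(n:ℝ)+2)) with hε
  set w : ℕ → ℝ := fun n => ε n * |t| with hw
  have htpos : 0 < |t| := abs_pos.2 ht
  have hwpos : ∀ n, 0 < w n := fun n => mul_pos eps_pos htpos
  have hwt : Filter.Tendsto w Filter.atTop (nhdsWithin 0 (Set.Ioi 0)) := by
    apply tendsto_nhdsWithin_of_tendsto_nhds_of_eventually_within
    · have h0 := eps_tendsto.mul_const |t|
      rw [zero_mul] at h0
      exact h0
    · exact Filter.Eventually.of_forall (fun n => hwpos n)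
  have hL := tendsto_log_sinc.comp hwt
  have hM : Filter.Tendsto (fun n : ℕ => (6*t^2) * (Real.log (Real.sin (w n) / w n) / (w n)^2))
      Filter.atTop (nhds (-t^2)) := by
    have := hL.const_mul (6*t^2)
    have h6 : (6*t^2) * (-(1/6)) = -t^2 := by ring
    rw [h6] at this
    exact this
  have hMR : ∀ n : ℕ, (6*t^2) * (Real.log (Real.sin (w n) / w n) / (w n)^2)
      = (2*(n:ℝ)+2) * Real.log (Real.sin (w n) / w n) := by
    intro n
    have hw2 : (w n)^2 = 6 * t^2 / (2*(n:ℝ)+2) := by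
      rw [hw]
      simp only
      rw [mul_pow, eps_sq, sq_abs]
      ring
    rw [hw2]
    have h1 : (2*(n:ℝ)+2) ≠ 0 := by positivity
    field_simp
  have hMexp : Filter.Tendsto (fun n : ℕ => (2*(n:ℝ)+2) * Real.log (Real.sin (w n) / w n))
      Filter.atTop (nhds (-t^2)) := by
    apply hM.congr
    intro n; rw [hMR]
  have hExp := (Real.continuous_exp.tendsto _).comp hMexp
  have hev : ∀ᶠ n : ℕ in Filter.atTop, w n < 1 :=
    (hwt.mono_right nhdsWithin_le_nhds).eventually_lt_const one_pos
  apply hExp.congr'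
  filter_upwards [hev] with n hn
  have hwp := hwpos n
  have hsinpos : 0 < Real.sin (w n) := Real.sin_pos_of_pos_of_lt_pi hwp
    (lt_trans hn (by linarith [Real.pi_gt_three]))
  have hX : 0 < Real.sin (w n) / w n := div_pos hsinpos hwp
  have habs : Real.sin (ε n * t) / (ε n * t) = Real.sin (w n) / w n := by
    rw [hw]
    simp only
    rw [← sinc_abs (ε n * t), abs_mul, abs_of_pos (eps_pos (n := n))]
  show Real.exp ((2*(n:ℝ)+2) * Real.log (Real.sin (w n) / w n))
      = (Real.sin (ε n * t) / (ε n * t)) ^ (2*n+2)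
  rw [habs]
  have : ((2*n+2 : ℕ) : ℝ) = 2*(n:ℝ)+2 := by push_cast; ring
  rw [← this, Real.exp_nat_mul, Real.exp_log hX]

lemma nat_sq_le_two_pow : ∀ m : ℕ, 4 ≤ m → m^2 ≤ 2^m := by
  intro m hm
  induction m with
  | zero => omega
  | succ k ih =>
    rcases Nat.lt_or_ge k 4 with hk | hk
    · interval_cases k <;> simp_all
    · have h1 := ih hk
      have : (k+1)^2 ≤ 2 * k^2 := by nlinarith
      calc (k+1)^2 ≤ 2 * k^2 := this
        _ ≤ 2 * 2^k := by omega
        _ = 2^(k+1) := by ring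

/-- Uniform domination of the rescaled sinc powers. -/
lemma F_bound {n : ℕ} (hn : 2 ≤ n) {t : ℝ} (ht : t ≠ 0) :
    |(Real.sin (Real.sqrt (6/(2*(n:ℝ)+2)) * t) / (Real.sqrt (6/(2*(n:ℝ)+2)) * t)) ^ (2*n+2)|
      ≤ Real.exp (-t^2) + 2/(1+t^2) := by
  set ε : ℝ := Real.sqrt (6/(2*(n:ℝ)+2)) with hε
  have hεpos : 0 < ε := eps_pos
  have htpos : 0 < |t| := abs_pos.2 ht
  set w : ℝ := ε * |t| with hw
  have hwpos : 0 < w := mul_pos hεpos htpos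
  have hM6 : (6:ℝ) ≤ 2*(n:ℝ)+2 := by
    have : (2:ℝ) ≤ (n:ℝ) := by exact_mod_cast hn
    linarith
  have habs : |Real.sin (ε * t) / (ε * t)| = |Real.sin w / w| := by
    rw [hw, ← sinc_abs (ε * t), abs_mul, abs_of_pos hεpos]
  rw [abs_pow, habs]
  rcases le_or_gt w 2 with hw2 | hw2
  · -- Gaussian regime
    have h1 : |Real.sin w / w| ≤ Real.exp (-(w^2/6)) := abs_sinc_le_gauss hwpos hw2
    have h2 : |Real.sin w / w| ^ (2*n+2) ≤ (Real.exp (-(w^2/6))) ^ (2*n+2) :=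
      pow_le_pow_left₀ (abs_nonneg _) h1 _
    have h3 : (Real.exp (-(w^2/6))) ^ (2*n+2) = Real.exp (-t^2) := by
      rw [← Real.exp_nat_mul]
      congr 1
      have hw2eq : w^2 = 6 * t^2 / (2*(n:ℝ)+2) := by
        rw [hw, mul_pow, hε, eps_sq, sq_abs]; ring
      rw [hw2eq]
      push_cast
      field_simp
    have hpos2 : (0:ℝ) ≤ 2/(1+t^2) := by positivity
    calc |Real.sin w / w| ^ (2*n+2) ≤ Real.exp (-t^2) := h3 ▸ h2
      _ ≤ _ := by linarith
  · -- tail regime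
    have hsle : |Real.sin w / w| ≤ w⁻¹ := by
      rw [abs_div, abs_of_pos hwpos, div_le_iff₀ hwpos, inv_mul_cancel₀ hwpos.ne']
      exact abs_le.mpr ⟨Real.neg_one_le_sin w, Real.sin_le_one w⟩
    have hwinv : w⁻¹ < 1/2 := by
      rw [inv_eq_one_div, div_lt_div_iff₀ hwpos (by norm_num)]
      linarith
    have hwinv_pos : 0 < w⁻¹ := inv_pos.2 hwpos
    have key : |Real.sin w / w| ^ (2*n+2) ≤ (1/2)^(2*n-1) * w⁻¹^3 := by
      have hsplit : (2*n+2) = (2*n-1) + 3 := by omega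
      calc |Real.sin w / w| ^ (2*n+2) ≤ w⁻¹ ^ (2*n+2) :=
            pow_le_pow_left₀ (abs_nonneg _) hsle _
        _ = w⁻¹^(2*n-1) * w⁻¹^3 := by rw [hsplit, pow_add]
        _ ≤ (1/2)^(2*n-1) * w⁻¹^3 := by
            apply mul_le_mul_of_nonneg_right _ (by positivity)
            exact pow_le_pow_left₀ hwinv_pos.le hwinv.le _
    -- bound the constant
    have hwinv3 : w⁻¹^3 = ε⁻¹^3 * |t|⁻¹^3 := by
      rw [hw, mul_inv, mul_pow]
    have hεinv : ε⁻¹^2 = (2*(n:ℝ)+2)/6 := by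
      rw [inv_pow, eps_sq, inv_div]
    have hεinv_le : ε⁻¹^3 ≤ ((2*(n:ℝ)+2)/6)^2 := by
      have h1 : ε⁻¹^3 = ε⁻¹^2 * ε⁻¹ := by ring
      have h2 : ε⁻¹ ≤ (2*(n:ℝ)+2)/6 := by
        have heq : ε⁻¹ = Real.sqrt ((2*(n:ℝ)+2)/6) := by
          rw [hε, ← Real.sqrt_inv, inv_div]
        rw [heq]
        calc Real.sqrt ((2*(n:ℝ)+2)/6) ≤ Real.sqrt (((2*(n:ℝ)+2)/6)^2) := by
              apply Real.sqrt_le_sqrt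
              nlinarith
          _ = (2*(n:ℝ)+2)/6 := Real.sqrt_sq (by linarith)
      calc ε⁻¹^3 = ε⁻¹^2 * ε⁻¹ := h1
        _ = (2*(n:ℝ)+2)/6 * ε⁻¹ := by rw [hεinv]
        _ ≤ (2*(n:ℝ)+2)/6 * ((2*(n:ℝ)+2)/6) := by
            apply mul_le_mul_of_nonneg_left h2 (by positivity)
        _ = ((2*(n:ℝ)+2)/6)^2 := (sq _).symm
    have hconst : (1/2:ℝ)^(2*n-1) * ((2*(n:ℝ)+2)/6)^2 ≤ 1 := by
      have hcast : ((2*n+2 : ℕ):ℝ) = 2*(n:ℝ)+2 := by push_cast; ring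
      have hnat := nat_sq_le_two_pow (2*n+2) (by omega)
      have hreal : (2*(n:ℝ)+2)^2 ≤ 2^(2*n+2) := by
        rw [← hcast]
        exact_mod_cast hnat
      have hsplit2 : (2*n+2) = (2*n-1) + 3 := by omega
      have h2pow : (1/2:ℝ)^(2*n-1) * 2^(2*n+2) = 8 := by
        rw [hsplit2, pow_add]
        calc (1/2:ℝ)^(2*n-1) * ((2:ℝ)^(2*n-1) * 2^3)
            = ((1/2:ℝ)*2)^(2*n-1) * 8 := by rw [mul_pow]; ring
          _ = 8 := by norm_num
      have hstep : ((2*(n:ℝ)+2)/6)^2 ≤ (2:ℝ)^(2*n+2)/36 := by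
        have heq : ((2*(n:ℝ)+2)/6)^2 = (2*(n:ℝ)+2)^2/36 := by ring
        rw [heq]
        gcongr
      calc (1/2:ℝ)^(2*n-1) * ((2*(n:ℝ)+2)/6)^2
          ≤ (1/2:ℝ)^(2*n-1) * ((2:ℝ)^(2*n+2)/36) := by
            apply mul_le_mul_of_nonneg_left hstep (by positivity)
        _ = (1/2:ℝ)^(2*n-1) * (2:ℝ)^(2*n+2) / 36 := by ring
        _ = 8/36 := by rw [h2pow]
        _ ≤ 1 := by norm_num
    have ht2 : (2:ℝ) < |t| := by
      have hε1 : ε ≤ 1 := by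
        rw [hε]
        rw [show (1:ℝ) = Real.sqrt 1 by rw [Real.sqrt_one]]
        apply Real.sqrt_le_sqrt
        rw [div_le_one (by positivity)]
        linarith
      nlinarith [hwpos, hw2]
    have htinv : |t|⁻¹^3 ≤ 2/(1+t^2) := by
      have h1 : |t|⁻¹^3 ≤ |t|⁻¹^2 := by
        apply pow_le_pow_of_le_one (by positivity) _ (by omega)
        rw [inv_le_one_iff₀]
        right; linarith
      have h2 : |t|⁻¹^2 = 1/t^2 := by
        rw [inv_pow, sq_abs, one_div]
      have h3 : (1:ℝ)/t^2 ≤ 2/(1+t^2) := by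
        rw [div_le_div_iff₀ (by positivity) (by positivity)]
        nlinarith [sq_abs t]
      calc |t|⁻¹^3 ≤ |t|⁻¹^2 := h1
        _ = 1/t^2 := h2
        _ ≤ 2/(1+t^2) := h3
    have hfinal : |Real.sin w / w| ^ (2*n+2) ≤ 2/(1+t^2) := by
      calc |Real.sin w / w| ^ (2*n+2) ≤ (1/2)^(2*n-1) * w⁻¹^3 := key
        _ = (1/2)^(2*n-1) * ε⁻¹^3 * |t|⁻¹^3 := by rw [hwinv3]; ring
        _ ≤ (1/2)^(2*n-1) * ((2*(n:ℝ)+2)/6)^2 * |t|⁻¹^3 := by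
            apply mul_le_mul_of_nonneg_right _ (by positivity)
            exact mul_le_mul_of_nonneg_left hεinv_le (by positivity)
        _ ≤ 1 * |t|⁻¹^3 := mul_le_mul_of_nonneg_right hconst (by positivity)
        _ = |t|⁻¹^3 := one_mul _
        _ ≤ 2/(1+t^2) := htinv
    have : (0:ℝ) ≤ Real.exp (-t^2) := (Real.exp_pos _).le
    linarith

lemma integral_asymptotics :
    Filter.Tendsto (fun n : ℕ => Real.sqrt ((2*(n:ℝ)+2)/12) *
      ∫ ξ : ℝ, (Real.sin (π*ξ)/(π*ξ))^(2*n+2))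
      Filter.atTop (nhds (1/Real.sqrt (2*π))) := by
  set ε : ℕ → ℝ := fun n => Real.sqrt (6/(2*(n:ℝ)+2)) with hε
  set F : ℕ → ℝ → ℝ := fun n t => (Real.sin (ε n * t) / (ε n * t))^(2*n+2) with hF
  have hsub : ∀ n : ℕ, (∫ ξ : ℝ, (Real.sin (π*ξ)/(π*ξ))^(2*n+2))
      = (ε n / π) * ∫ t : ℝ, F n t := by
    intro n
    set a : ℝ := ε n / π with ha
    have hapos : 0 < a := div_pos eps_pos pi_pos
    have hcomp := MeasureTheory.Measure.integral_comp_mul_left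
      (fun ξ : ℝ => (Real.sin (π*ξ)/(π*ξ))^(2*n+2)) a
    have harg : ∀ t : ℝ, π * (a * t) = ε n * t := by
      intro t; rw [ha]; field_simp
    have hFa : (fun t : ℝ => (Real.sin (π*(a*t))/(π*(a*t)))^(2*n+2)) = F n := by
      funext t; rw [harg t]
    rw [hFa] at hcomp
    rw [hcomp, abs_of_pos (inv_pos.2 hapos), smul_eq_mul]
    rw [← mul_assoc, mul_inv_cancel₀ hapos.ne', one_mul]
  have hcoef : ∀ n : ℕ, Real.sqrt ((2*(n:ℝ)+2)/12) * (ε n / π) = 1/(π * Real.sqrt 2) := by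
    intro n
    have hM : (0:ℝ) < 2*(n:ℝ)+2 := by positivity
    rw [hε]
    rw [div_eq_mul_inv (Real.sqrt _), ← mul_assoc]
    rw [← Real.sqrt_mul (by positivity)]
    have : (2*(n:ℝ)+2)/12 * (6/(2*(n:ℝ)+2)) = 1/2 := by field_simp; ring
    rw [this]
    rw [show (1:ℝ)/2 = 2⁻¹ by norm_num, Real.sqrt_inv]
    field_simp
  have hmeas : ∀ n : ℕ, MeasureTheory.AEStronglyMeasurable (F n) MeasureTheory.volume := by
    intro n
    apply Measurable.aestronglyMeasurable
    exact ((Real.measurable_sin.comp (measurable_const_mul (ε n))).div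
      (measurable_const_mul (ε n))).pow_const _
  have h0 : ∀ᵐ (t : ℝ), t ≠ 0 := by
    rw [MeasureTheory.ae_iff]
    have : {t : ℝ | ¬ t ≠ 0} = {0} := by ext t; simp
    rw [this]
    exact measure_singleton 0
  have hDCT : Filter.Tendsto (fun n : ℕ => ∫ t : ℝ, F n t) Filter.atTop
      (nhds (∫ t : ℝ, Real.exp (-t^2))) := by
    apply MeasureTheory.tendsto_integral_filter_of_dominated_convergence
      (bound := fun t => Real.exp (-t^2) + 2/(1+t^2))
    · exact Filter.Eventually.of_forall hmeas
    · rw [Filter.eventually_atTop]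
      refine ⟨2, fun n hn => ?_⟩
      filter_upwards [h0] with t ht
      rw [Real.norm_eq_abs]
      exact F_bound hn ht
    · apply MeasureTheory.Integrable.add
      · simpa using integrable_exp_neg_mul_sq one_pos
      · have := integrable_inv_one_add_sq.const_mul 2
        apply this.congr
        filter_upwards with t
        rw [mul_comm]
        rw [div_eq_mul_inv, mul_comm]
    · filter_upwards [h0] with t ht
      exact pointwise_lim ht
  have hgauss : (∫ t : ℝ, Real.exp (-t^2)) = Real.sqrt π := by
    have := integral_gaussian 1
    simpa using this
  have hfinal : Filter.Tendsto (fun n : ℕ => (1/(π * Real.sqrt 2)) * ∫ t : ℝ, F n t)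
      Filter.atTop (nhds ((1/(π * Real.sqrt 2)) * Real.sqrt π)) := by
    have := hDCT.const_mul (1/(π * Real.sqrt 2))
    rwa [hgauss] at this
  have heq : ∀ n : ℕ, Real.sqrt ((2*(n:ℝ)+2)/12) * (∫ ξ : ℝ, (Real.sin (π*ξ)/(π*ξ))^(2*n+2))
      = (1/(π * Real.sqrt 2)) * ∫ t : ℝ, F n t := by
    intro n
    rw [hsub n, ← mul_assoc, hcoef n]
  have hval : (1/(π * Real.sqrt 2)) * Real.sqrt π = 1/Real.sqrt (2*π) := by
    rw [Real.sqrt_mul (by norm_num : (0:ℝ) ≤ 2)]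
    rw [div_mul_eq_mul_div, one_mul]
    rw [eq_div_iff (by positivity)]
    rw [div_mul_eq_mul_div]
    rw [div_eq_iff (by positivity)]
    calc Real.sqrt π * (Real.sqrt 2 * Real.sqrt π) = (Real.sqrt π * Real.sqrt π) * Real.sqrt 2 := by
          ring
      _ = π * Real.sqrt 2 := by rw [Real.mul_self_sqrt Real.pi_pos.le]
      _ = 1 * (π * Real.sqrt 2) := by ring
  rw [← hval]
  exact hfinal.congr (fun n => (heq n).symm)

noncomputable def betaC (n : ℕ) : ℝ → ℂ := fun x => (beta n x : ℂ)

lemma betaC_integrable (n : ℕ) : Integrable (betaC n) := (beta_integrable n).ofReal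

lemma smul_betaC0 (g : ℝ → ℂ) :
    (fun v : ℝ => g v • betaC 0 v)
      = fun v => Set.indicator (Set.Icc (-(1/2) : ℝ) (1/2)) g v := by
  funext v
  by_cases hv : v ∈ Set.Icc (-(1/2) : ℝ) (1/2)
  · rw [Set.indicator_of_mem hv]
    show _ • ((Set.indicator _ 1 v : ℝ) : ℂ) = _
    rw [Set.indicator_of_mem hv]
    simp
  · rw [Set.indicator_of_notMem hv]
    show _ • ((Set.indicator _ 1 v : ℝ) : ℂ) = 0
    rw [Set.indicator_of_notMem hv]
    simp

lemma fourier_beta0 {ξ : ℝ} (hξ : ξ ≠ 0) :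
    𝓕 (betaC 0) ξ = ((Real.sin (π*ξ)/(π*ξ) : ℝ) : ℂ) := by
  rw [Real.fourier_real_eq_integral_exp_smul]
  set c : ℂ := ((-2*π*ξ : ℝ) : ℂ) * Complex.I with hc
  have hπξ : (π*ξ : ℝ) ≠ 0 := mul_ne_zero Real.pi_ne_zero hξ
  have hcne : c ≠ 0 := by
    apply mul_ne_zero _ Complex.I_ne_zero
    rw [Complex.ofReal_ne_zero]
    intro h
    apply hπξ
    nlinarith
  have hind : (fun v : ℝ => Complex.exp (↑(-2 * π * v * ξ) * Complex.I) • betaC 0 v)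
      = fun v : ℝ => Set.indicator (Set.Icc (-(1/2) : ℝ) (1/2))
        (fun v => Complex.exp (c * v)) v := by
    have harg : (fun v : ℝ => Complex.exp (↑(-2 * π * v * ξ) * Complex.I))
        = fun v : ℝ => Complex.exp (c * v) := by
      funext v
      congr 1
      rw [hc]; push_cast; ring
    rw [show (fun v : ℝ => Complex.exp (↑(-2 * π * v * ξ) * Complex.I) • betaC 0 v)
        = fun v : ℝ => (fun w : ℝ => Complex.exp (c * w)) v • betaC 0 v by
      funext v
      congr 2
      rw [hc]; push_cast; ring]
    exact smul_betaC0 _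
  rw [hind, integral_indicator measurableSet_Icc, integral_Icc_eq_integral_Ioc,
    ← intervalIntegral.integral_of_le (by norm_num : (-(1/2) : ℝ) ≤ 1/2)]
  rw [integral_exp_mul_complex hcne]
  have h1 : c * ((1/2 : ℝ) : ℂ) = -((π*ξ : ℝ) : ℂ) * Complex.I := by rw [hc]; push_cast; ring
  have h2 : c * ((-(1/2) : ℝ) : ℂ) = ((π*ξ : ℝ) : ℂ) * Complex.I := by rw [hc]; push_cast; ring
  have hE1 : ∀ z : ℂ, Complex.exp (-z * Complex.I) = Complex.cos z - Complex.sin z * Complex.I := by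
    intro z
    rw [Complex.exp_mul_I, Complex.cos_neg, Complex.sin_neg]
    ring
  rw [h1, h2, hE1, Complex.exp_mul_I]
  set Z : ℂ := ((π*ξ : ℝ) : ℂ) with hZ
  have hnum : (Complex.cos Z - Complex.sin Z * Complex.I) - (Complex.cos Z + Complex.sin Z * Complex.I)
      = Complex.sin Z * (-2 * Complex.I) := by ring
  have hcz : c = Z * (-2 * Complex.I) := by rw [hc, hZ]; push_cast; ring
  have hI2 : (-2 : ℂ) * Complex.I ≠ 0 := by
    apply mul_ne_zero _ Complex.I_ne_zero
    norm_num
  rw [hnum, hcz, mul_div_mul_right _ _ hI2, Complex.ofReal_div, Complex.ofReal_sin]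

lemma fourier_betaC_succ (n : ℕ) (ξ : ℝ) :
    𝓕 (betaC (n+1)) ξ = 𝓕 (betaC 0) ξ * 𝓕 (betaC n) ξ := by
  set E : ℝ → ℂ := fun v => Complex.exp (↑(-2 * π * v * ξ) * Complex.I) with hE
  have hEnorm : ∀ v, ‖E v‖ = 1 := fun v => Complex.norm_exp_ofReal_mul_I _
  have hEcont : Continuous E := by
    apply Complex.continuous_exp.comp
    exact (Complex.continuous_ofReal.comp (by continuity)).mul continuous_const
  have hEmul : ∀ u d : ℝ, E (u + d) = E u * E d := by
    intro u d
    rw [hE]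
    simp only
    rw [← Complex.exp_add]
    congr 1
    push_cast
    ring
  -- Fubini integrability
  have hFub : Integrable (Function.uncurry fun v y : ℝ => E v * betaC n (v - y + 1/2))
      ((volume : Measure ℝ).prod ((volume : Measure ℝ).restrict (Set.Ioc 0 1))) := by
    apply Integrable.mono'
      (g := fun p : ℝ × ℝ => Set.indicator (Set.Icc (-(n:ℝ)-2) ((n:ℝ)+2)) (fun _ => (1:ℝ)) p.1)
    · have h1 : Integrable (Set.indicator (Set.Icc (-(n:ℝ)-2) ((n:ℝ)+2)) (fun _ => (1:ℝ)))
          (volume : Measure ℝ) := by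
        rw [integrable_indicator_iff measurableSet_Icc]
        exact integrableOn_const measure_Icc_lt_top.ne
      have h2 : Integrable (fun _ : ℝ => (1:ℝ)) ((volume : Measure ℝ).restrict (Set.Ioc 0 1)) :=
        integrableOn_const measure_Ioc_lt_top.ne
      have h3 := h1.mul_prod h2
      apply h3.congr
      filter_upwards with p
      rw [mul_one]
    · apply AEStronglyMeasurable.mul
      · exact (hEcont.comp continuous_fst).aestronglyMeasurable
      · apply Measurable.aestronglyMeasurable
        exact Complex.measurable_ofReal.comp ((beta_measurable n).comp (by fun_prop))
    · rw [show (volume : Measure ℝ) = (volume : Measure ℝ).restrict Set.univ by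
          rw [Measure.restrict_univ], Measure.prod_restrict]
      filter_upwards [ae_restrict_mem ((MeasurableSet.univ).prod measurableSet_Ioc)] with p hp
      obtain ⟨-, hy⟩ := hp
      show ‖E p.1 * betaC n (p.1 - p.2 + 1/2)‖ ≤ _
      rw [norm_mul, hEnorm, one_mul]
      simp only [betaC]
      rw [Complex.norm_real, Real.norm_eq_abs, abs_of_nonneg (beta_nonneg _ _)]
      by_cases hv : p.1 ∈ Set.Icc (-(n:ℝ)-2) ((n:ℝ)+2)
      · rw [Set.indicator_of_mem hv]
        exact beta_le_one _ _
      · rw [Set.indicator_of_notMem hv]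
        rw [Set.mem_Icc] at hv
        push_neg at hv
        rw [Set.mem_Ioc] at hy
        rw [beta_eq_zero]
        rcases le_or_gt (-(n:ℝ)-2) p.1 with h | h
        · have := hv h
          rw [abs_of_nonneg (by linarith)]
          linarith
        · rw [abs_of_nonpos (by linarith)]
          linarith
  calc 𝓕 (betaC (n+1)) ξ
      = ∫ v, E v • betaC (n+1) v := Real.fourier_real_eq_integral_exp_smul _ _
    _ = ∫ v, ∫ y in Set.Ioc (0:ℝ) 1, E v * betaC n (v - y + 1/2) := by
        congr 1; funext v
        have hb : betaC (n+1) v = ∫ y in Set.Ioc (0:ℝ) 1, betaC n (v - y + 1/2) := by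
          show (((∫ y in (0:ℝ)..1, beta n (v - y + 1/2)) : ℝ) : ℂ) = _
          rw [← intervalIntegral.integral_ofReal,
            intervalIntegral.integral_of_le zero_le_one]
          rfl
        rw [hb, smul_eq_mul, ← integral_const_mul]
    _ = ∫ y in Set.Ioc (0:ℝ) 1, ∫ v, E v * betaC n (v - y + 1/2) :=
        integral_integral_swap hFub
    _ = ∫ y in Set.Ioc (0:ℝ) 1, E (y - 1/2) * 𝓕 (betaC n) ξ := by
        apply integral_congr_ae
        filter_upwards with y
        have hsub := MeasureTheory.integral_add_right_eq_self (μ := volume)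
          (fun v => E v * betaC n (v - y + 1/2)) (y - 1/2)
        rw [← hsub]
        have hterm : ∀ u : ℝ, E (u + (y - 1/2)) * betaC n (u + (y - 1/2) - y + 1/2)
            = E (y - 1/2) * (E u * betaC n u) := by
          intro u
          rw [hEmul]
          have : u + (y - 1/2) - y + 1/2 = u := by ring
          rw [this]
          ring
        simp_rw [hterm]
        rw [integral_const_mul]
        congr 1
        rw [Real.fourier_real_eq_integral_exp_smul]
        rfl
    _ = (∫ y in Set.Ioc (0:ℝ) 1, E (y - 1/2)) * 𝓕 (betaC n) ξ :=
        integral_mul_const _ _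
    _ = 𝓕 (betaC 0) ξ * 𝓕 (betaC n) ξ := by
        congr 1
        rw [Real.fourier_real_eq_integral_exp_smul]
        rw [show (fun v : ℝ => Complex.exp (↑(-2 * π * v * ξ) * Complex.I) • betaC 0 v)
            = fun v => E v • betaC 0 v from rfl]
        rw [smul_betaC0 E, integral_indicator measurableSet_Icc,
          integral_Icc_eq_integral_Ioc,
          ← intervalIntegral.integral_of_le (by norm_num : (-(1/2) : ℝ) ≤ 1/2),
          ← intervalIntegral.integral_of_le (zero_le_one (α := ℝ))]
        rw [intervalIntegral.integral_comp_sub_right E (1/2)]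
        norm_num


lemma fourier_betaC (n : ℕ) {ξ : ℝ} (hξ : ξ ≠ 0) :
    𝓕 (betaC n) ξ = (((Real.sin (π*ξ)/(π*ξ)) : ℝ) : ℂ)^(n+1) := by
  induction n with
  | zero => rw [pow_one]; exact fourier_beta0 hξ
  | succ n ih =>
    rw [fourier_betaC_succ, ih, fourier_beta0 hξ, ← pow_succ']

lemma sinc_pow_bound (k : ℕ) {ξ : ℝ} (hξ : ξ ≠ 0) :
    |Real.sin (π*ξ)/(π*ξ)|^(k+2) ≤ 2/(1+ξ^2) := by
  have hz : (π*ξ) ≠ 0 := mul_ne_zero Real.pi_ne_zero hξ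
  have hzpos : 0 < |π*ξ| := abs_pos.2 hz
  set s : ℝ := |Real.sin (π*ξ)/(π*ξ)| with hs
  have hs0 : 0 ≤ s := abs_nonneg _
  have hs1 : s ≤ 1 := by
    rw [hs, abs_div, div_le_one hzpos]
    exact Real.abs_sin_le_abs
  have hpow : s^(k+2) ≤ s^2 :=
    pow_le_pow_of_le_one hs0 hs1 (by omega)
  have hsq : s^2 ≤ 2/(1+ξ^2) := by
    rcases le_or_gt (ξ^2) 1 with h | h
    · have h1 : s^2 ≤ 1 := by
        calc s^2 ≤ 1^2 := pow_le_pow_left₀ hs0 hs1 2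
          _ = 1 := one_pow 2
      have h2 : (1:ℝ) ≤ 2/(1+ξ^2) := by
        rw [le_div_iff₀ (by positivity)]
        linarith
      linarith
    · have hinv : s ≤ |π*ξ|⁻¹ := by
        rw [hs, abs_div, div_le_iff₀ hzpos, inv_mul_cancel₀ hzpos.ne']
        exact abs_le.mpr ⟨Real.neg_one_le_sin _, Real.sin_le_one _⟩
      have h1 : s^2 ≤ (|π*ξ|⁻¹)^2 := pow_le_pow_left₀ hs0 hinv 2
      have h2 : (|π*ξ|⁻¹)^2 = 1/(π^2*ξ^2) := by
        rw [inv_pow, sq_abs, one_div, mul_pow]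
      have hπ1 : (1:ℝ) ≤ π^2 := by nlinarith [Real.pi_gt_three]
      have h3 : (1:ℝ)/(π^2*ξ^2) ≤ 1/ξ^2 := by
        apply div_le_div_of_nonneg_left one_pos.le (by positivity)
        nlinarith
      have h4 : (1:ℝ)/ξ^2 ≤ 2/(1+ξ^2) := by
        rw [div_le_div_iff₀ (by positivity) (by positivity)]
        nlinarith
      calc s^2 ≤ (|π*ξ|⁻¹)^2 := h1
        _ = 1/(π^2*ξ^2) := h2
        _ ≤ 1/ξ^2 := h3
        _ ≤ 2/(1+ξ^2) := h4
  linarith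

lemma bound2_integrable : Integrable (fun ξ : ℝ => 2/(1+ξ^2)) := by
  have h := integrable_inv_one_add_sq.const_mul 2
  apply h.congr
  filter_upwards with t
  rw [div_eq_mul_inv]

lemma ae_ne_zero : ∀ᵐ (t : ℝ), t ≠ 0 := by
  rw [MeasureTheory.ae_iff]
  have h : {t : ℝ | ¬ t ≠ 0} = {0} := by ext t; simp
  rw [h]
  exact measure_singleton 0

lemma fourier_betaC_integrable (n : ℕ) : Integrable (𝓕 (betaC (n+1))) := by
  apply Integrable.mono' bound2_integrable
  · exact (VectorFourier.fourierIntegral_continuous Real.continuous_fourierChar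
      continuous_inner (betaC_integrable (n+1))).aestronglyMeasurable
  · filter_upwards [ae_ne_zero] with ξ hξ
    rw [fourier_betaC (n+1) hξ]
    rw [norm_pow, Complex.norm_real, Real.norm_eq_abs]
    exact sinc_pow_bound n hξ

lemma beta_eval (n : ℕ) :
    beta (n+1) 0 = ∫ ξ : ℝ, (Real.sin (π*ξ)/(π*ξ))^(n+2) := by
  have hcont : ContinuousAt (betaC (n+1)) 0 :=
    (Complex.continuous_ofReal.comp (beta_continuous n)).continuousAt
  have hinv := (betaC_integrable (n+1)).fourierInv_fourier_eq (fourier_betaC_integrable n) hcont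
  have hL : 𝓕⁻ (𝓕 (betaC (n+1))) 0 = ∫ ξ : ℝ, 𝓕 (betaC (n+1)) ξ := by
    rw [Real.fourierInv_eq]
    simp
  have hcongr : (∫ ξ : ℝ, 𝓕 (betaC (n+1)) ξ)
      = ∫ ξ : ℝ, (((Real.sin (π*ξ)/(π*ξ))^(n+2) : ℝ) : ℂ) := by
    apply integral_congr_ae
    filter_upwards [ae_ne_zero] with ξ hξ
    rw [fourier_betaC (n+1) hξ]
    push_cast
    ring
  have hfin : ((beta (n+1) 0 : ℝ) : ℂ)
      = (((∫ ξ : ℝ, (Real.sin (π*ξ)/(π*ξ))^(n+2)) : ℝ) : ℂ) := by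
    calc ((beta (n+1) 0 : ℝ) : ℂ) = 𝓕⁻ (𝓕 (betaC (n+1))) 0 := hinv.symm
      _ = ∫ ξ : ℝ, 𝓕 (betaC (n+1)) ξ := hL
      _ = ∫ ξ : ℝ, (((Real.sin (π*ξ)/(π*ξ))^(n+2) : ℝ) : ℂ) := hcongr
      _ = _ := integral_ofReal
  exact_mod_cast hfin

theorem beta_asymptotics :
    Filter.Tendsto (fun n : ℕ => Real.sqrt ((2 * (n : ℝ) + 2) / 12) * beta (2 * n + 1) 0)
      Filter.atTop (nhds (1 / Real.sqrt (2 * π))) := by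
  apply integral_asymptotics.congr
  intro n
  rw [beta_eval (2*n)]
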